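/- arXiv:2106.07094 — 2 statements merged into one kernel-verified Lean document; each statement's English description precedes it below -/
import Mathlib

section
/- Let f : ℝ^d → ℝ be convex and L-smooth (differentiable with L-Lipschitz gradient, L > 0), bounded below with f* := inf f. Let w_0 ∈ ℝ^d and define gradient-descent iterates w_{τ+1} = w_τ − η ∇f(w_τ) with step size 0 < η ≤ 1/L. Let E be a positive integer and u := Σ_{τ=0}^{E−1} ∇f(w_τ). Then for every w* ∈ ℝ^d, ⟨u, w_0 − w*⟩ ≥ E·(f(w_0) − f(w*)) − 2 η² L² E³ (f(w_0) − f*). -/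
open scoped RealInnerProductSpace

section Aux

variable {d : ℕ}

/-- derivative of f along a line -/
lemma aux_line_hasDerivAt (f : EuclideanSpace ℝ (Fin d) → ℝ)
    (hdiff : Differentiable ℝ f) (x v : EuclideanSpace ℝ (Fin d)) (t : ℝ) :
    HasDerivAt (fun s : ℝ => f (x + s • v)) ⟪gradient f (x + t • v), v⟫ t := by
  have hc : HasDerivAt (fun s : ℝ => x + s • v) v t := by
    simpa using ((hasDerivAt_id t).smul_const v).const_add x
  have hf : HasFDerivAt f (fderiv ℝ f (x + t • v)) (x + t • v) :=
    (hdiff (x + t • v)).hasFDerivAt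
  have h := hf.comp_hasDerivAt t hc
  have hval : ⟪gradient f (x + t • v), v⟫ = fderiv ℝ f (x + t • v) v := by
    rw [gradient]
    exact InnerProductSpace.toDual_symm_apply
  rw [hval]
  exact h

/-- convexity gradient inequality -/
lemma aux_convex_ineq (f : EuclideanSpace ℝ (Fin d) → ℝ)
    (hconv : ConvexOn ℝ Set.univ f) (hdiff : Differentiable ℝ f)
    (x v : EuclideanSpace ℝ (Fin d)) :
    ⟪gradient f x, v⟫ ≤ f (x + v) - f x := by
  set g : ℝ → ℝ := fun s => f (x + s • v) with hg
  have hgconv : ConvexOn ℝ Set.univ g := by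
    have := hconv.comp_affineMap (AffineMap.lineMap x (x + v) : ℝ →ᵃ[ℝ] _)
    have heq : (f ∘ (AffineMap.lineMap x (x + v) : ℝ →ᵃ[ℝ] _)) = g := by
      funext s
      simp only [Function.comp_apply, AffineMap.lineMap_apply_module, g]
      congr 1
      module
    rw [heq] at this
    simpa using this
  have hd : HasDerivAt g ⟪gradient f x, v⟫ 0 := by
    have := aux_line_hasDerivAt f hdiff x v 0
    simpa using this
  have := hgconv.le_slope_of_hasDerivAt (Set.mem_univ (0:ℝ)) (Set.mem_univ (1:ℝ))
    zero_lt_one hd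
  have hslope : slope g 0 1 = g 1 - g 0 := by simp [slope_def_field]
  rw [hslope] at this
  simpa [g] using this

/-- smoothness quadratic upper bound -/
lemma aux_smooth_ineq (f : EuclideanSpace ℝ (Fin d) → ℝ) (L : ℝ) (hL : 0 < L)
    (hdiff : Differentiable ℝ f)
    (hlip : ∀ x y, ‖gradient f x - gradient f y‖ ≤ L * ‖x - y‖)
    (x v : EuclideanSpace ℝ (Fin d)) :
    f (x + v) ≤ f x + ⟪gradient f x, v⟫ + L / 2 * ‖v‖ ^ 2 := by
  set φ : ℝ → ℝ := fun t => f (x + t • v) - t * ⟪gradient f x, v⟫ - L * t ^ 2 * ‖v‖ ^ 2 / 2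
    with hφ
  have hder : ∀ t : ℝ, HasDerivAt φ
      (⟪gradient f (x + t • v), v⟫ - ⟪gradient f x, v⟫ - L * t * ‖v‖ ^ 2) t := by
    intro t
    have h1 := aux_line_hasDerivAt f hdiff x v t
    have h2 : HasDerivAt (fun t : ℝ => t * ⟪gradient f x, v⟫) ⟪gradient f x, v⟫ t := by
      simpa using (hasDerivAt_id t).mul_const ⟪gradient f x, v⟫
    have h3 : HasDerivAt (fun t : ℝ => L * t ^ 2 * ‖v‖ ^ 2 / 2) (L * t * ‖v‖ ^ 2) t := by
      have : HasDerivAt (fun t : ℝ => t ^ 2) (2 * t) t := by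
        simpa using hasDerivAt_pow 2 t
      have := ((this.const_mul L).mul_const (‖v‖ ^ 2)).div_const 2
      rw [show L * t * ‖v‖ ^ 2 = L * (2 * t) * ‖v‖ ^ 2 / 2 by ring]
      exact this
    exact (h1.sub h2).sub h3
  have hanti : AntitoneOn φ (Set.Icc (0:ℝ) 1) := by
    apply antitoneOn_of_deriv_nonpos (convex_Icc 0 1)
    · exact (fun t _ => ((hder t).differentiableAt).continuousAt.continuousWithinAt)
    · exact fun t _ => ((hder t).differentiableAt).differentiableWithinAt
    · intro t ht
      rw [interior_Icc] at ht
      rw [(hder t).deriv]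
      have hb : ⟪gradient f (x + t • v) - gradient f x, v⟫
          ≤ L * t * ‖v‖ ^ 2 := by
        calc ⟪gradient f (x + t • v) - gradient f x, v⟫
            ≤ ‖gradient f (x + t • v) - gradient f x‖ * ‖v‖ := real_inner_le_norm _ _
          _ ≤ (L * ‖(x + t • v) - x‖) * ‖v‖ := by
              have := hlip (x + t • v) x
              exact mul_le_mul_of_nonneg_right this (norm_nonneg v)
          _ = L * t * ‖v‖ ^ 2 := by
              rw [add_sub_cancel_left, norm_smul]
              simp [abs_of_pos ht.1]
              ring
      rw [inner_sub_left] at hb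
      linarith
  have := hanti (Set.left_mem_Icc.2 zero_le_one) (Set.right_mem_Icc.2 zero_le_one) zero_le_one
  simp only [φ, one_smul, zero_smul, add_zero, one_pow, zero_pow, mul_zero, zero_mul,
    sub_zero, one_mul, mul_one] at this
  linarith

end Aux

set_option maxHeartbeats 1000000 in
/-- Equation (pf-july15-13): lower bound on the inner product of the update with
the direction towards any comparison point. -/
theorem stmt_9 {d : ℕ} (f : EuclideanSpace ℝ (Fin d) → ℝ) (L : ℝ) (hL : 0 < L)
    (hconv : ConvexOn ℝ Set.univ f)
    (hdiff : Differentiable ℝ f)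
    (hlip : ∀ x y, ‖gradient f x - gradient f y‖ ≤ L * ‖x - y‖)
    (fstar : ℝ) (hfstar : IsGLB (Set.range f) fstar)
    (η : ℝ) (hη0 : 0 < η) (hη : η ≤ 1 / L)
    (w : ℕ → EuclideanSpace ℝ (Fin d))
    (hw : ∀ τ, w (τ + 1) = w τ - η • gradient f (w τ))
    (E : ℕ) (hE : 0 < E)
    (u : EuclideanSpace ℝ (Fin d))
    (hu : u = ∑ τ ∈ Finset.range E, gradient f (w τ))
    (wstar : EuclideanSpace ℝ (Fin d)) :
    ⟪u, w 0 - wstar⟫ ≥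
      (E : ℝ) * (f (w 0) - f wstar)
        - 2 * η ^ 2 * L ^ 2 * (E : ℝ) ^ 3 * (f (w 0) - fstar) := by
  have hηL : η * L ≤ 1 := by
    rw [le_div_iff₀ hL] at hη
    linarith
  have hlow : ∀ x, fstar ≤ f x := fun x => hfstar.1 ⟨x, rfl⟩
  set G : ℝ := f (w 0) - fstar with hG
  clear_value G
  have hG0 : 0 ≤ G := by rw [hG]; linarith [hlow (w 0)]
  -- gradient norm bound at any point
  have hgradsq : ∀ x, ‖gradient f x‖ ^ 2 ≤ 2 * L * (f x - fstar) := by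
    intro x
    have h := aux_smooth_ineq f L hL hdiff hlip x (-(1 / L) • gradient f x)
    have h1 : ⟪gradient f x, -(1 / L) • gradient f x⟫ = -(1 / L) * ‖gradient f x‖ ^ 2 := by
      rw [real_inner_smul_right, real_inner_self_eq_norm_sq]
    have h2 : ‖-(1 / L) • gradient f x‖ ^ 2 = (1 / L) ^ 2 * ‖gradient f x‖ ^ 2 := by
      have hn : ‖(-(1 / L) : ℝ)‖ = 1 / L := by
        rw [Real.norm_eq_abs, abs_neg, abs_of_pos (one_div_pos.2 hL)]
      rw [norm_smul, hn]
      ring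
    rw [h1, h2] at h
    have h3 := hlow (x + -(1 / L) • gradient f x)
    have heq : f x + -(1 / L) * ‖gradient f x‖ ^ 2 + L / 2 * ((1 / L) ^ 2 * ‖gradient f x‖ ^ 2)
        = f x - 1 / (2 * L) * ‖gradient f x‖ ^ 2 := by
      field_simp
      ring
    have key : fstar ≤ f x - 1 / (2 * L) * ‖gradient f x‖ ^ 2 := by linarith
    have h2L : (0:ℝ) < 2 * L := by linarith
    have hmul : (2 * L) * (1 / (2 * L) * ‖gradient f x‖ ^ 2)
        ≤ (2 * L) * (f x - fstar) :=
      mul_le_mul_of_nonneg_left (by linarith) (le_of_lt h2L)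
    have hid : (2 * L) * (1 / (2 * L) * ‖gradient f x‖ ^ 2) = ‖gradient f x‖ ^ 2 := by
      field_simp
    linarith
  -- descent
  have hdesc : ∀ τ, f (w (τ + 1)) ≤ f (w τ) := by
    intro τ
    have h := aux_smooth_ineq f L hL hdiff hlip (w τ) (-η • gradient f (w τ))
    have he : w τ + -η • gradient f (w τ) = w (τ + 1) := by
      rw [hw τ]; module
    rw [he] at h
    have h1 : ⟪gradient f (w τ), -η • gradient f (w τ)⟫ = -η * ‖gradient f (w τ)‖ ^ 2 := by
      rw [real_inner_smul_right, real_inner_self_eq_norm_sq]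
    have h2 : ‖-η • gradient f (w τ)‖ ^ 2 = η ^ 2 * ‖gradient f (w τ)‖ ^ 2 := by
      have hn : ‖(-η : ℝ)‖ = η := by
        rw [Real.norm_eq_abs, abs_neg, abs_of_pos hη0]
      rw [norm_smul, hn]
      ring
    rw [h1, h2] at h
    nlinarith [sq_nonneg ‖gradient f (w τ)‖]
  have hmono : ∀ τ, f (w τ) ≤ f (w 0) := by
    intro τ
    induction τ with
    | zero => exact le_rfl
    | succ n ih => exact le_trans (hdesc n) ih
  -- gradient norm along the iterates
  set S : ℝ := Real.sqrt (2 * L * G) with hS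
  have hS0 : 0 ≤ S := by rw [hS]; exact Real.sqrt_nonneg _
  have hSsq : S ^ 2 = 2 * L * G := by
    rw [hS]; exact Real.sq_sqrt (by nlinarith)
  clear_value S
  have hgS : ∀ τ, ‖gradient f (w τ)‖ ≤ S := by
    intro τ
    have h1 : ‖gradient f (w τ)‖ ^ 2 ≤ 2 * L * G := by
      have := hgradsq (w τ)
      have := hmono τ
      simp only [hG]
      nlinarith
    nlinarith [norm_nonneg (gradient f (w τ)), Real.sqrt_nonneg (2 * L * G),
      Real.sq_sqrt (show (0:ℝ) ≤ 2 * L * G by nlinarith)]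
  -- displacement
  have hdisp : ∀ τ, w 0 - w τ = η • ∑ s ∈ Finset.range τ, gradient f (w s) := by
    intro τ
    induction τ with
    | zero => simp
    | succ n ih =>
      rw [hw n, Finset.sum_range_succ, smul_add]
      rw [← ih]
      abel
  have hdispnorm : ∀ τ, ‖w 0 - w τ‖ ≤ η * τ * S := by
    intro τ
    rw [hdisp τ, norm_smul]
    have : ‖∑ s ∈ Finset.range τ, gradient f (w s)‖ ≤ (τ : ℝ) * S := by
      calc ‖∑ s ∈ Finset.range τ, gradient f (w s)‖
          ≤ ∑ s ∈ Finset.range τ, ‖gradient f (w s)‖ := norm_sum_le _ _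
        _ ≤ ∑ s ∈ Finset.range τ, S := Finset.sum_le_sum (fun s _ => hgS s)
        _ = (τ : ℝ) * S := by simp [mul_comm]
      
    calc ‖η‖ * ‖∑ s ∈ Finset.range τ, gradient f (w s)‖
        ≤ ‖η‖ * ((τ : ℝ) * S) := by
          exact mul_le_mul_of_nonneg_left this (norm_nonneg _)
      _ = η * τ * S := by rw [Real.norm_eq_abs, abs_of_pos hη0]; ring
  -- per-term bound
  have hterm : ∀ τ ∈ Finset.range E,
      (f (w 0) - f wstar) - η ^ 2 * L ^ 2 * (τ : ℝ) ^ 2 * G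
        ≤ ⟪gradient f (w τ), w 0 - wstar⟫ := by
    intro τ hτ
    have hB : ⟪gradient f (w τ), wstar - w τ⟫ ≤ f wstar - f (w τ) := by
      have := aux_convex_ineq f hconv hdiff (w τ) (wstar - w τ)
      rwa [add_sub_cancel] at this
    have hC : f (w 0) ≤ f (w τ) + ⟪gradient f (w τ), w 0 - w τ⟫
        + L / 2 * ‖w 0 - w τ‖ ^ 2 := by
      have := aux_smooth_ineq f L hL hdiff hlip (w τ) (w 0 - w τ)
      rwa [add_sub_cancel] at this
    have hsplit : ⟪gradient f (w τ), w 0 - wstar⟫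
        = ⟪gradient f (w τ), w 0 - w τ⟫ + ⟪gradient f (w τ), w τ - wstar⟫ := by
      rw [← inner_add_right]
      congr 1
      abel
    have hnormsq : ‖w 0 - w τ‖ ^ 2 ≤ η ^ 2 * (τ : ℝ) ^ 2 * (2 * L * G) := by
      calc ‖w 0 - w τ‖ ^ 2 ≤ (η * τ * S) ^ 2 :=
            pow_le_pow_left₀ (norm_nonneg _) (hdispnorm τ) 2
        _ = η ^ 2 * (τ : ℝ) ^ 2 * S ^ 2 := by ring
        _ = η ^ 2 * (τ : ℝ) ^ 2 * (2 * L * G) := by rw [hSsq]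
    have hBB : f (w τ) - f wstar ≤ ⟪gradient f (w τ), w τ - wstar⟫ := by
      have : ⟪gradient f (w τ), wstar - w τ⟫ = -⟪gradient f (w τ), w τ - wstar⟫ := by
        rw [← inner_neg_right]; congr 1; abel
      rw [this] at hB
      linarith
    rw [hsplit]
    have hmul := mul_le_mul_of_nonneg_left hnormsq (by positivity : (0:ℝ) ≤ L / 2)
    linarith [hC, hBB, hmul]
  -- sum up
  have hsum : ⟪u, w 0 - wstar⟫
      = ∑ τ ∈ Finset.range E, ⟪gradient f (w τ), w 0 - wstar⟫ := by
    rw [hu]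
    exact sum_inner _ _ _
  rw [hsum]
  have h1 : ∑ τ ∈ Finset.range E,
      ((f (w 0) - f wstar) - η ^ 2 * L ^ 2 * (τ : ℝ) ^ 2 * G)
      ≤ ∑ τ ∈ Finset.range E, ⟪gradient f (w τ), w 0 - wstar⟫ :=
    Finset.sum_le_sum hterm
  have h2 : ∑ τ ∈ Finset.range E,
      ((f (w 0) - f wstar) - η ^ 2 * L ^ 2 * (τ : ℝ) ^ 2 * G)
      = (E : ℝ) * (f (w 0) - f wstar)
        - η ^ 2 * L ^ 2 * G * ∑ τ ∈ Finset.range E, (τ : ℝ) ^ 2 := by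
    rw [Finset.sum_sub_distrib, Finset.sum_const, Finset.card_range, nsmul_eq_mul,
      Finset.mul_sum]
    congr 1
    exact Finset.sum_congr rfl (fun τ _ => by ring)
  have h3 : ∑ τ ∈ Finset.range E, (τ : ℝ) ^ 2 ≤ (E : ℝ) ^ 3 := by
    calc ∑ τ ∈ Finset.range E, (τ : ℝ) ^ 2
        ≤ ∑ τ ∈ Finset.range E, (E : ℝ) ^ 2 := by
          apply Finset.sum_le_sum
          intro τ hτ
          have : (τ : ℝ) ≤ E := by
            exact_mod_cast le_of_lt (Finset.mem_range.1 hτ)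
          nlinarith [Nat.cast_nonneg (α := ℝ) τ]
      _ = (E : ℝ) * (E : ℝ) ^ 2 := by simp [mul_comm]
      _ = (E : ℝ) ^ 3 := by ring
  have hcoef : 0 ≤ η ^ 2 * L ^ 2 * G := by positivity
  rw [h2] at h1
  have : η ^ 2 * L ^ 2 * G * ∑ τ ∈ Finset.range E, (τ : ℝ) ^ 2
      ≤ 2 * η ^ 2 * L ^ 2 * (E : ℝ) ^ 3 * G := by
    have hmul := mul_le_mul_of_nonneg_left h3 hcoef
    have hpos : 0 ≤ η ^ 2 * L ^ 2 * G * (E : ℝ) ^ 3 :=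
      mul_nonneg hcoef (by positivity)
    linarith
  simp only [hG] at *
  linarith
end

section
/- Let f : ℝ^d → ℝ be convex and L-smooth (differentiable with L-Lipschitz gradient, L > 0), bounded below with f* := inf f. Let E be a positive integer, w_0 ∈ ℝ^d, and define gradient-descent iterates w_{τ+1} = w_τ − η ∇f(w_τ) with step size 0 < η ≤ 1/(2L). Let u := Σ_{τ=0}^{E−1} ∇f(w_τ). Fix w* ∈ ℝ^d, set Δ := f(w*) − f*, and let Ĉ ≥ 4√(L Δ). Define the clipped update g := u·min(1, Ĉ·E/‖u‖) and A := −2η⟨g, w_0 − w*⟩ + η²‖g‖². Then: if ‖u‖ ≤ Ĉ·E, A ≤ −ηE{(2 − 2ηLE − 4η²L²E²)(f(w_0) − f(w*)) − (2ηLE + 4η²L²E²)Δ}; and if ‖u‖ > Ĉ·E, A ≤ −ηE·(3Ĉ/(8LE))·‖u‖. -/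
open scoped RealInnerProductSpace

lemma aux_inner_deriv {d : ℕ} (f : EuclideanSpace ℝ (Fin d) → ℝ) (hdiff : Differentiable ℝ f)
    (x v : EuclideanSpace ℝ (Fin d)) (t : ℝ) :
    HasDerivAt (fun s : ℝ => f (x + s • v)) ⟪gradient f (x + t • v), v⟫ t := by
  have hline : HasDerivAt (fun s : ℝ => x + s • v) v t := by
    simpa using ((hasDerivAt_id t).smul_const v).const_add x
  have hf := (hdiff (x + t • v)).hasGradientAt.hasFDerivAt
  have h := hf.comp_hasDerivAt t hline
  simp only [InnerProductSpace.toDual_apply_apply] at h; exact h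

lemma smooth_upper {d : ℕ} (f : EuclideanSpace ℝ (Fin d) → ℝ) {L : ℝ} (hL : 0 < L)
    (hdiff : Differentiable ℝ f)
    (hlip : ∀ x y, ‖gradient f x - gradient f y‖ ≤ L * ‖x - y‖)
    (x y : EuclideanSpace ℝ (Fin d)) :
    f y ≤ f x + ⟪gradient f x, y - x⟫ + L / 2 * ‖y - x‖ ^ 2 := by
  set v := y - x with hv
  set φ : ℝ → ℝ := fun t => f (x + t • v) - t * ⟪gradient f x, v⟫ - L / 2 * t ^ 2 * ‖v‖ ^ 2 with hφ
  have hder : ∀ t, HasDerivAt φ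
      (⟪gradient f (x + t • v), v⟫ - ⟪gradient f x, v⟫ - L * t * ‖v‖ ^ 2) t := by
    intro t
    have h1 := aux_inner_deriv f hdiff x v t
    have h2 : HasDerivAt (fun s : ℝ => s * ⟪gradient f x, v⟫) ⟪gradient f x, v⟫ t := by
      simpa using (hasDerivAt_id t).mul_const (⟪gradient f x, v⟫ : ℝ)
    have h3 : HasDerivAt (fun s : ℝ => L / 2 * s ^ 2 * ‖v‖ ^ 2) (L * t * ‖v‖ ^ 2) t := by
      have h := ((hasDerivAt_pow 2 t).const_mul (L / 2)).mul_const (‖v‖ ^ 2)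
      refine h.congr_deriv ?_
      ring
    exact (h1.sub h2).sub h3
  have hanti : AntitoneOn φ (Set.Icc (0:ℝ) 1) := by
    apply antitoneOn_of_deriv_nonpos (convex_Icc 0 1)
    · exact fun t _ => ((hder t).continuousAt).continuousWithinAt
    · exact fun t _ => ((hder t).differentiableAt).differentiableWithinAt
    · intro t ht
      rw [interior_Icc] at ht
      rw [(hder t).deriv]
      have hcs : ⟪gradient f (x + t • v) - gradient f x, v⟫
          ≤ ‖gradient f (x + t • v) - gradient f x‖ * ‖v‖ := real_inner_le_norm _ _
      have hl := hlip (x + t • v) x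
      rw [add_sub_cancel_left, norm_smul, Real.norm_eq_abs, abs_of_pos ht.1] at hl
      rw [inner_sub_left] at hcs
      nlinarith [norm_nonneg v, mul_le_mul_of_nonneg_right hl (norm_nonneg v)]
  have h01 := hanti (Set.left_mem_Icc.2 zero_le_one) (Set.right_mem_Icc.2 zero_le_one) zero_le_one
  have e0 : φ 0 = f x := by simp [hφ]
  have e1 : φ 1 = f y - ⟪gradient f x, v⟫ - L / 2 * ‖v‖ ^ 2 := by
    simp [hφ, hv]
  rw [e0, e1] at h01
  linarith

lemma convex_lower {d : ℕ} (f : EuclideanSpace ℝ (Fin d) → ℝ)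
    (hconv : ConvexOn ℝ Set.univ f) (hdiff : Differentiable ℝ f)
    (x y : EuclideanSpace ℝ (Fin d)) :
    f x + ⟪gradient f x, y - x⟫ ≤ f y := by
  set v := y - x with hv
  have hline : ConvexOn ℝ Set.univ (fun t : ℝ => f (x + t • v)) := by
    have h := hconv.comp_affineMap (AffineMap.lineMap x y)
    have : (f ∘ (AffineMap.lineMap x y)) = fun t : ℝ => f (x + t • v) := by
      funext t
      simp [AffineMap.lineMap_apply, hv, vsub_eq_sub, vadd_eq_add, add_comm]
    rw [this] at h
    simpa using h
  have hder := aux_inner_deriv f hdiff x v 0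
  rw [zero_smul, add_zero] at hder
  have h := hline.le_slope_of_hasDerivAt (Set.mem_univ (0:ℝ)) (Set.mem_univ (1:ℝ)) one_pos hder
  rw [slope_def_field] at h
  simp only [one_smul, sub_zero, zero_smul, add_zero, div_one] at h
  have : x + v = y := by rw [hv]; abel
  rw [this] at h
  linarith

lemma grad_sq_le {d : ℕ} (f : EuclideanSpace ℝ (Fin d) → ℝ) {L : ℝ} (hL : 0 < L)
    (hdiff : Differentiable ℝ f)
    (hlip : ∀ x y, ‖gradient f x - gradient f y‖ ≤ L * ‖x - y‖)
    {fstar : ℝ} (hfs : ∀ z, fstar ≤ f z)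
    (x : EuclideanSpace ℝ (Fin d)) :
    ‖gradient f x‖ ^ 2 ≤ 2 * L * (f x - fstar) := by
  have h := smooth_upper f hL hdiff hlip x (x - L⁻¹ • gradient f x)
  have e1 : x - L⁻¹ • gradient f x - x = -(L⁻¹ • gradient f x) := by abel
  rw [e1] at h
  rw [inner_neg_right, real_inner_smul_right, real_inner_self_eq_norm_sq, norm_neg,
    norm_smul, Real.norm_eq_abs, abs_of_pos (inv_pos.2 hL)] at h
  have hfs' := hfs (x - L⁻¹ • gradient f x)
  have hL' : L ≠ 0 := ne_of_gt hL
  have : f (x - L⁻¹ • gradient f x) ≤ f x - ‖gradient f x‖ ^ 2 / (2 * L) := by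
    rw [mul_pow] at h
    have : L / 2 * ((L⁻¹)^2 * ‖gradient f x‖^2) = ‖gradient f x‖^2 / (2*L) := by
      field_simp
    have e2 : L⁻¹ * ‖gradient f x‖ ^ 2 = 2 * (‖gradient f x‖ ^ 2 / (2 * L)) := by
      field_simp
    linarith
  have h2 : fstar ≤ f x - ‖gradient f x‖ ^ 2 / (2 * L) := le_trans hfs' this
  have : ‖gradient f x‖ ^ 2 / (2 * L) ≤ f x - fstar := by linarith
  calc ‖gradient f x‖ ^ 2 = 2 * L * (‖gradient f x‖ ^ 2 / (2 * L)) := by field_simp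
    _ ≤ 2 * L * (f x - fstar) := by
        apply mul_le_mul_of_nonneg_left this (by positivity)

lemma sum_inner_partial {d : ℕ} (v : ℕ → EuclideanSpace ℝ (Fin d)) (n : ℕ) :
    ∑ τ ∈ Finset.range n, ⟪v τ, ∑ s ∈ Finset.range τ, v s⟫
      = (‖∑ τ ∈ Finset.range n, v τ‖ ^ 2 - ∑ τ ∈ Finset.range n, ‖v τ‖ ^ 2) / 2 := by
  induction n with
  | zero => simp
  | succ n ih =>
    rw [Finset.sum_range_succ, Finset.sum_range_succ, Finset.sum_range_succ, ih]
    have hexp : ‖(∑ τ ∈ Finset.range n, v τ) + v n‖ ^ 2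
        = ‖∑ τ ∈ Finset.range n, v τ‖ ^ 2
          + 2 * ⟪v n, ∑ s ∈ Finset.range n, v s⟫ + ‖v n‖ ^ 2 := by
      rw [@norm_add_sq_real, real_inner_comm]
    rw [hexp]
    ring



open scoped RealInnerProductSpace

set_option maxHeartbeats 2000000 in
/-- Combined per-client bound (equation pf-july15-19-0) in the proof of
Theorem B.1: core deterministic step in the convergence analysis of
DP-FedAvg with clipping. -/
theorem stmt_16 {d : ℕ} (f : EuclideanSpace ℝ (Fin d) → ℝ) (L : ℝ) (hL : 0 < L)
    (hconv : ConvexOn ℝ Set.univ f)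
    (hdiff : Differentiable ℝ f)
    (hlip : ∀ x y, ‖gradient f x - gradient f y‖ ≤ L * ‖x - y‖)
    (fstar : ℝ) (hfstar : IsGLB (Set.range f) fstar)
    (E : ℕ) (hE : 0 < E)
    (η : ℝ) (hη0 : 0 < η) (hη : η ≤ 1 / (2 * L))
    (w : ℕ → EuclideanSpace ℝ (Fin d))
    (hw : ∀ τ, w (τ + 1) = w τ - η • gradient f (w τ))
    (u : EuclideanSpace ℝ (Fin d))
    (hu : u = ∑ τ ∈ Finset.range E, gradient f (w τ))
    (wstar : EuclideanSpace ℝ (Fin d))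
    (Δ : ℝ) (hΔ : Δ = f wstar - fstar)
    (Chat : ℝ) (hChat : Chat ≥ 4 * Real.sqrt (L * Δ))
    (g : EuclideanSpace ℝ (Fin d))
    (hg : g = (min 1 (Chat * (E : ℝ) / ‖u‖)) • u)
    (A : ℝ) (hA : A = -2 * η * ⟪g, w 0 - wstar⟫ + η ^ 2 * ‖g‖ ^ 2) :
    (‖u‖ ≤ Chat * (E : ℝ) →
      A ≤ -(η * (E : ℝ)) *
        ((2 - 2 * η * L * (E : ℝ) - 4 * η ^ 2 * L ^ 2 * (E : ℝ) ^ 2)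
            * (f (w 0) - f wstar)
          - (2 * η * L * (E : ℝ) + 4 * η ^ 2 * L ^ 2 * (E : ℝ) ^ 2) * Δ)) ∧
    (‖u‖ > Chat * (E : ℝ) →
      A ≤ -(η * (E : ℝ)) * (3 * Chat / (8 * L * (E : ℝ))) * ‖u‖) := by
  have hfs : ∀ z, fstar ≤ f z := fun z => hfstar.1 ⟨z, rfl⟩
  have hΔ0 : 0 ≤ Δ := by rw [hΔ]; linarith [hfs wstar]
  set D0 : ℝ := f (w 0) - fstar with hD0
  clear_value D0
  have hD00 : 0 ≤ D0 := by rw [hD0]; linarith [hfs (w 0)]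
  have hE0 : (0:ℝ) < E := by exact_mod_cast hE
  have hηL : η * L ≤ 1 / 2 := by
    rw [le_div_iff₀ (by positivity : (0:ℝ) < 2 * L)] at hη
    nlinarith
  -- descent along iterates
  have hdesc : ∀ τ, f (w (τ + 1)) ≤ f (w τ) := by
    intro τ
    have h := smooth_upper f hL hdiff hlip (w τ) (w (τ + 1))
    rw [hw τ] at h ⊢
    have e1 : w τ - η • gradient f (w τ) - w τ = -(η • gradient f (w τ)) := by abel
    rw [e1, inner_neg_right, real_inner_smul_right, real_inner_self_eq_norm_sq, norm_neg,
      norm_smul, Real.norm_eq_abs, abs_of_pos hη0] at h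
    nlinarith [h, hηL, mul_nonneg hη0.le (sq_nonneg ‖gradient f (w τ)‖),
      sq_nonneg ‖gradient f (w τ)‖]
  have hmono : ∀ τ, f (w τ) ≤ f (w 0) := by
    intro τ
    induction τ with
    | zero => exact le_refl _
    | succ τ ih => exact (hdesc τ).trans ih
  have hG2 : ∀ τ, ‖gradient f (w τ)‖ ^ 2 ≤ 2 * L * D0 := by
    intro τ
    refine (grad_sq_le f hL hdiff hlip hfs (w τ)).trans ?_
    have := hmono τ
    nlinarith
  have hGs : ∀ τ, ‖gradient f (w τ)‖ ≤ Real.sqrt (2 * L * D0) := by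
    intro τ
    have h := Real.sqrt_le_sqrt (hG2 τ)
    rwa [Real.sqrt_sq (norm_nonneg _)] at h
  have hsqv : Real.sqrt (2 * L * D0) ^ 2 = 2 * L * D0 := Real.sq_sqrt (by positivity)
  have hw0τ : ∀ τ, w 0 - w τ = η • ∑ s ∈ Finset.range τ, gradient f (w s) := by
    intro τ
    induction τ with
    | zero => simp
    | succ τ ih =>
      have e : w 0 - w (τ + 1) = (w 0 - w τ) + η • gradient f (w τ) := by
        rw [hw τ]; abel
      rw [e, ih, Finset.sum_range_succ, smul_add]
  have hdist : ∀ τ, τ ≤ E → ‖w 0 - w τ‖ ≤ η * E * Real.sqrt (2 * L * D0) := by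
    intro τ hτ
    rw [hw0τ τ, norm_smul, Real.norm_eq_abs, abs_of_pos hη0]
    have h1 : ‖∑ s ∈ Finset.range τ, gradient f (w s)‖
        ≤ ∑ s ∈ Finset.range τ, ‖gradient f (w s)‖ := norm_sum_le _ _
    have h2 : ∑ s ∈ Finset.range τ, ‖gradient f (w s)‖
        ≤ (τ:ℝ) * Real.sqrt (2 * L * D0) := by
      have := Finset.sum_le_sum (fun s (_ : s ∈ Finset.range τ) => hGs s)
      rwa [Finset.sum_const, Finset.card_range, nsmul_eq_mul] at this
    have h3 : (τ:ℝ) ≤ E := Nat.cast_le.2 hτ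
    have hs0 := Real.sqrt_nonneg (2 * L * D0)
    have h4 : ‖∑ s ∈ Finset.range τ, gradient f (w s)‖ ≤ (E:ℝ) * Real.sqrt (2 * L * D0) :=
      (h1.trans h2).trans (mul_le_mul_of_nonneg_right h3 hs0)
    have h5 := mul_le_mul_of_nonneg_left h4 hη0.le
    linarith [h5]
  have hub : ‖u‖ ≤ (E:ℝ) * Real.sqrt (2 * L * D0) := by
    rw [hu]
    refine (norm_sum_le _ _).trans ?_
    have := Finset.sum_le_sum (fun s (_ : s ∈ Finset.range E) => hGs s)
    rwa [Finset.sum_const, Finset.card_range, nsmul_eq_mul] at this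
  constructor
  · -- Case 1
    intro h1
    have hgu : g = u := by
      rcases eq_or_ne u 0 with h0 | h0
      · rw [hg, h0, smul_zero]
      · have hupos : 0 < ‖u‖ := norm_pos_iff.2 h0
        have hle : (1:ℝ) ≤ Chat * E / ‖u‖ := (one_le_div hupos).2 h1
        rw [hg, min_eq_left hle, one_smul]
    set X : ℝ := f (w 0) - f wstar with hX
    clear_value X
    have hkey : ∀ τ ∈ Finset.range E,
        X - L / 2 * (η * E * Real.sqrt (2 * L * D0)) ^ 2
          ≤ ⟪gradient f (w τ), w 0 - wstar⟫ := by
      intro τ hτ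
      have hsplit : ⟪gradient f (w τ), w 0 - wstar⟫
          = ⟪gradient f (w τ), w 0 - w τ⟫ + ⟪gradient f (w τ), w τ - wstar⟫ := by
        rw [← inner_add_right]
        congr 1
        abel
      have hc := convex_lower f hconv hdiff (w τ) wstar
      have hs := smooth_upper f hL hdiff hlip (w τ) (w 0)
      have hd := hdist τ (Finset.mem_range.1 hτ).le
      have hdsq : ‖w 0 - w τ‖ ^ 2 ≤ (η * E * Real.sqrt (2 * L * D0)) ^ 2 :=
        pow_le_pow_left₀ (norm_nonneg _) hd 2
      have hneg : ⟪gradient f (w τ), w τ - wstar⟫ = -⟪gradient f (w τ), wstar - w τ⟫ := by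
        rw [← inner_neg_right]
        congr 1
        abel
      rw [hsplit, hneg]
      have hd2 := mul_le_mul_of_nonneg_left hdsq (by positivity : (0:ℝ) ≤ L / 2)
      linarith only [hc, hs, hd2, hX]
    have hS : (E:ℝ) * (X - L / 2 * (η * E * Real.sqrt (2 * L * D0)) ^ 2)
        ≤ ⟪u, w 0 - wstar⟫ := by
      rw [hu, sum_inner]
      have := Finset.sum_le_sum hkey
      rwa [Finset.sum_const, Finset.card_range, nsmul_eq_mul] at this
    have hu2 : ‖u‖ ^ 2 ≤ (E:ℝ) ^ 2 * (2 * L * D0) := by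
      have := pow_le_pow_left₀ (norm_nonneg u) hub 2
      rwa [mul_pow, hsqv] at this
    have hA1 : A ≤ -2 * η * ((E:ℝ) * (X - L / 2 * (η * E * Real.sqrt (2 * L * D0)) ^ 2))
        + η ^ 2 * ((E:ℝ) ^ 2 * (2 * L * D0)) := by
      rw [hA, hgu]
      have h2 := mul_le_mul_of_nonneg_left hS (by positivity : (0:ℝ) ≤ 2 * η)
      have h3 := mul_le_mul_of_nonneg_left hu2 (by positivity : (0:ℝ) ≤ η ^ 2)
      linarith only [h2, h3]
    have hA2 : A ≤ -2 * η * E * X + 2 * η ^ 3 * L ^ 2 * (E:ℝ) ^ 3 * D0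
        + 2 * η ^ 2 * L * (E:ℝ) ^ 2 * D0 := by
      refine hA1.trans (le_of_eq ?_)
      rw [mul_pow, mul_pow, hsqv]
      ring
    have hRHS : -(η * (E:ℝ)) *
        ((2 - 2 * η * L * (E:ℝ) - 4 * η ^ 2 * L ^ 2 * (E:ℝ) ^ 2) * X
          - (2 * η * L * (E:ℝ) + 4 * η ^ 2 * L ^ 2 * (E:ℝ) ^ 2) * Δ)
        = -2 * η * E * X + 2 * η ^ 2 * L * (E:ℝ) ^ 2 * D0
          + 4 * η ^ 3 * L ^ 2 * (E:ℝ) ^ 3 * D0 := by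
      have hΔX : Δ = D0 - X := by rw [hΔ, hD0, hX]; ring
      rw [hΔX]
      ring
    rw [hRHS]
    have hpos : (0:ℝ) ≤ 2 * η ^ 3 * L ^ 2 * (E:ℝ) ^ 3 * D0 := by positivity
    linarith only [hA2, hpos]
  · -- Case 2
    intro h2
    have hCnn : 0 ≤ Chat := le_trans (by positivity) hChat
    have hun : 0 < ‖u‖ := lt_of_le_of_lt (by positivity) h2
    set c : ℝ := Chat * E / ‖u‖ with hcdef
    have hc0 : 0 ≤ c := by positivity
    have hc1 : c < 1 := (div_lt_one hun).2 h2
    have hgc : g = c • u := by rw [hg, min_eq_right hc1.le]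
    have hnormg : ‖g‖ ^ 2 = c ^ 2 * ‖u‖ ^ 2 := by
      rw [hgc, norm_smul, Real.norm_eq_abs, abs_of_nonneg hc0, mul_pow]
    have hinng : ⟪g, w 0 - wstar⟫ = c * ⟪u, w 0 - wstar⟫ := by
      rw [hgc, real_inner_smul_left]
    -- key lower bound on ⟪u, w0 - w*⟫
    set SG : ℝ := ∑ τ ∈ Finset.range E, ‖gradient f (w τ)‖ ^ 2 with hSG
    have hb : ∑ τ ∈ Finset.range E, ⟪gradient f (w τ), w 0 - w τ⟫
        = η * ((‖u‖ ^ 2 - SG) / 2) := by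
      have e : ∀ τ, ⟪gradient f (w τ), w 0 - w τ⟫
          = η * ⟪gradient f (w τ), ∑ s ∈ Finset.range τ, gradient f (w s)⟫ := by
        intro τ
        rw [hw0τ τ, real_inner_smul_right]
      simp_rw [e]
      rw [← Finset.mul_sum, sum_inner_partial, ← hu, hSG]
    have hc2 : ∀ τ ∈ Finset.range E,
        ‖gradient f (w τ)‖ ^ 2 / (2 * L) - Δ ≤ ⟪gradient f (w τ), w τ - wstar⟫ := by
      intro τ _
      have hcv := convex_lower f hconv hdiff (w τ) wstar
      have hgl := grad_sq_le f hL hdiff hlip hfs (w τ)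
      have hneg : ⟪gradient f (w τ), w τ - wstar⟫ = -⟪gradient f (w τ), wstar - w τ⟫ := by
        rw [← inner_neg_right]; congr 1; abel
      rw [hneg]
      have hdv : ‖gradient f (w τ)‖ ^ 2 / (2 * L) ≤ f (w τ) - fstar := by
        rw [div_le_iff₀ (by positivity : (0:ℝ) < 2 * L)]
        nlinarith [hgl]
      rw [hΔ]
      linarith
    have hSsum : SG / (2 * L) - E * Δ ≤ ∑ τ ∈ Finset.range E, ⟪gradient f (w τ), w τ - wstar⟫ := by
      have := Finset.sum_le_sum hc2
      rw [Finset.sum_sub_distrib, Finset.sum_const, Finset.card_range, nsmul_eq_mul,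
        ← Finset.sum_div] at this
      exact this
    have hsplitu : ⟪u, w 0 - wstar⟫
        = (∑ τ ∈ Finset.range E, ⟪gradient f (w τ), w 0 - w τ⟫)
          + ∑ τ ∈ Finset.range E, ⟪gradient f (w τ), w τ - wstar⟫ := by
      rw [hu, sum_inner, ← Finset.sum_add_distrib]
      refine Finset.sum_congr rfl fun τ _ => ?_
      rw [← inner_add_right]
      congr 1
      abel
    have hSGu : ‖u‖ ^ 2 / E ≤ SG := by
      have h1 : ‖u‖ ≤ ∑ τ ∈ Finset.range E, ‖gradient f (w τ)‖ := by
        rw [hu]; exact norm_sum_le _ _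
      have h2 : (∑ τ ∈ Finset.range E, ‖gradient f (w τ)‖) ^ 2 ≤ (E:ℝ) * SG := by
        have := sq_sum_le_card_mul_sum_sq
          (s := Finset.range E) (f := fun τ => ‖gradient f (w τ)‖)
        rwa [Finset.card_range] at this
      rw [div_le_iff₀ hE0]
      nlinarith [h1, h2, norm_nonneg u, Finset.sum_nonneg
        (fun τ (_ : τ ∈ Finset.range E) => norm_nonneg (gradient f (w τ)))]
    have hSG0 : 0 ≤ SG := Finset.sum_nonneg fun τ _ => sq_nonneg _
    have hK : ‖u‖ ^ 2 / (4 * L * E) + η / 2 * ‖u‖ ^ 2 - E * Δ ≤ ⟪u, w 0 - wstar⟫ := by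
      rw [hsplitu, hb]
      have hcoef : 1 / (4 * L) ≤ 1 / (2 * L) - η / 2 := by
        have h8 : η / 2 ≤ 1 / (4 * L) := by
          rw [div_le_div_iff₀ (by norm_num) (by positivity)]
          rw [le_div_iff₀ (by positivity : (0:ℝ) < 2 * L)] at hη
          nlinarith [hη]
        have h9 : (1:ℝ) / (2 * L) - 1 / (4 * L) = 1 / (4 * L) := by field_simp; ring
        linarith only [h8, h9]
      have h5 : ‖u‖ ^ 2 / (4 * L * E) ≤ SG * (1 / (2 * L) - η / 2) := by
        have h6 : ‖u‖ ^ 2 / (4 * L * E) = (‖u‖ ^ 2 / E) * (1 / (4 * L)) := by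
          field_simp
        rw [h6]
        have h7 : (‖u‖ ^ 2 / E) * (1 / (4 * L)) ≤ SG * (1 / (4 * L)) :=
          mul_le_mul_of_nonneg_right hSGu (by positivity)
        refine h7.trans ?_
        exact mul_le_mul_of_nonneg_left hcoef hSG0
      have heq : η * ((‖u‖ ^ 2 - SG) / 2) + (SG / (2 * L) - E * Δ)
          = SG * (1 / (2 * L) - η / 2) + η / 2 * ‖u‖ ^ 2 - E * Δ := by ring
      linarith only [hSsum, h5, heq]
    -- ‖u‖² ≥ 16 L E² Δ
    have hΔu : 16 * L * (E:ℝ) ^ 2 * Δ ≤ ‖u‖ ^ 2 := by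
      have h4 : 4 * Real.sqrt (L * Δ) * E ≤ Chat * E :=
        mul_le_mul_of_nonneg_right hChat hE0.le
      have h5 : 4 * Real.sqrt (L * Δ) * E ≤ ‖u‖ := h4.trans h2.le
      have h6 := pow_le_pow_left₀ (by positivity) h5 2
      have h7 : (4 * Real.sqrt (L * Δ) * (E:ℝ)) ^ 2 = 16 * (L * Δ) * (E:ℝ) ^ 2 := by
        rw [mul_pow, mul_pow, Real.sq_sqrt (by positivity : (0:ℝ) ≤ L * Δ)]
        ring
      rw [h7] at h6
      linarith only [h6]
    have hA2 : A ≤ -2 * η * c * (‖u‖ ^ 2 / (4 * L * E) - E * Δ) := by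
      rw [hA, hinng, hnormg]
      have h1 := mul_le_mul_of_nonneg_left hK (by positivity : (0:ℝ) ≤ 2 * η * c)
      have h3 : η ^ 2 * (c ^ 2 * ‖u‖ ^ 2) ≤ η ^ 2 * (c * ‖u‖ ^ 2) := by
        have : c ^ 2 ≤ c := by nlinarith
        have := mul_le_mul_of_nonneg_right this (sq_nonneg ‖u‖)
        nlinarith [sq_nonneg η]
      have heq : -2 * η * c * (‖u‖ ^ 2 / (4 * L * E) - E * Δ)
          = -(2 * η * c * (‖u‖ ^ 2 / (4 * L * E) + η / 2 * ‖u‖ ^ 2 - E * Δ))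
            + η ^ 2 * (c * ‖u‖ ^ 2) := by ring
      linarith only [h1, h3, heq]
    have hstep3 : 3 / (16 * L * E) * ‖u‖ ^ 2 ≤ ‖u‖ ^ 2 / (4 * L * E) - E * Δ := by
      have heq : ‖u‖ ^ 2 / (4 * L * E) - E * Δ - 3 / (16 * L * E) * ‖u‖ ^ 2
          = (‖u‖ ^ 2 - 16 * L * (E:ℝ) ^ 2 * Δ) / (16 * L * E) := by
        field_simp
        ring
      have hnum : 0 ≤ (‖u‖ ^ 2 - 16 * L * (E:ℝ) ^ 2 * Δ) / (16 * L * E) :=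
        div_nonneg (by linarith [hΔu]) (by positivity)
      linarith only [heq ▸ hnum]
    have hA3 : A ≤ -2 * η * c * (3 / (16 * L * E) * ‖u‖ ^ 2) := by
      have := mul_le_mul_of_nonneg_left hstep3 (by positivity : (0:ℝ) ≤ 2 * η * c)
      linarith only [hA2, this]
    refine hA3.trans (le_of_eq ?_)
    rw [hcdef]
    field_simp
    ring
end
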